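/- arXiv:2406.01585 — 2 statements merged into one kernel-verified Lean document; each statement's English description precedes it below -/
import Mathlib

section
/- For a piecewise smooth path x : [0,T] → V, the signature satisfies Chen's relation: S(x)_{s,t} = S(x)_{s,u} ⊗ S(x)_{u,t} for all 0 ≤ s ≤ u ≤ t ≤ T. -/
open MeasureTheory intervalIntegral

/-- Coordinate iterated integrals (the signature) of a path `x : ℝ → ℝ^d`:
for a word `w = (i₁,…,iₙ)`, `sigC x w s t` is the iterated integral
`∫_{s<t₁<⋯<tₙ<t} ẋ^{i₁}(t₁)⋯ẋ^{iₙ}(tₙ) dt₁⋯dtₙ`. -/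
noncomputable def sigC {d : ℕ} (x : ℝ → Fin d → ℝ) : List (Fin d) → ℝ → ℝ → ℝ
  | [], _, _ => 1
  | i :: w, s, t => ∫ u in s..t, deriv (fun r => x r i) u * sigC x w u t

lemma sigC_cont {d : ℕ} (x : ℝ → Fin d → ℝ)
    (hx : ∀ i, ContDiff ℝ 1 (fun r => x r i)) :
    ∀ (w : List (Fin d)) (t : ℝ), Continuous fun r => sigC x w r t := by
  intro w
  induction w with
  | nil => intro t; simpa [sigC] using continuous_const
  | cons i w ih =>
    intro t
    have hc : Continuous fun v => deriv (fun r => x r i) v * sigC x w v t :=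
      ((hx i).continuous_deriv le_rfl).mul (ih t)
    have : Continuous fun r => ∫ v in t..r,
        deriv (fun r => x r i) v * sigC x w v t :=
      intervalIntegral.continuous_primitive
        (fun a b => hc.intervalIntegrable a b) t
    have h2 : Continuous fun r => -∫ v in t..r,
        deriv (fun r => x r i) v * sigC x w v t := this.neg
    convert h2 using 2 with r
    · exact (intervalIntegral.integral_symm t r)

/-- Chen's relation: for a (piecewise) smooth path, the signature over `[s,t]`
is the tensor product of the signatures over `[s,u]` and `[u,t]`; in
coordinates, the `w`-component is the sum over all splittings of the word. -/
theorem stmt3 {d : ℕ} (x : ℝ → Fin d → ℝ)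
    (hx : ∀ i, ContDiff ℝ 1 (fun r => x r i))
    (s u t : ℝ) (hsu : s ≤ u) (hut : u ≤ t) :
    ∀ w : List (Fin d), sigC x w s t =
      ∑ k ∈ Finset.range (w.length + 1),
        sigC x (w.take k) s u * sigC x (w.drop k) u t := by
  have key : ∀ (w : List (Fin d)) (s : ℝ), s ≤ u →
      sigC x w s t = ∑ k ∈ Finset.range (w.length + 1),
        sigC x (w.take k) s u * sigC x (w.drop k) u t := by
    intro w
    induction w with
    | nil => intro s hs; simp [sigC]
    | cons i w ih =>
      intro s hs
      have hderiv : Continuous (deriv fun r => x r i) :=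
        (hx i).continuous_deriv le_rfl
      have hf : Continuous fun r => deriv (fun r => x r i) r * sigC x w r t :=
        hderiv.mul (sigC_cont x hx w t)
      have hsplit : sigC x (i :: w) s t
          = (∫ r in s..u, deriv (fun r => x r i) r * sigC x w r t)
            + sigC x (i :: w) u t := by
        show (∫ r in s..t, deriv (fun r => x r i) r * sigC x w r t) = _
        rw [← intervalIntegral.integral_add_adjacent_intervals
          (hf.intervalIntegrable s u) (hf.intervalIntegrable u t)]
        rfl
      have hcongr : (∫ r in s..u, deriv (fun r => x r i) r * sigC x w r t)
          = ∫ r in s..u, ∑ k ∈ Finset.range (w.length + 1),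
              (deriv (fun r => x r i) r * sigC x (w.take k) r u)
                * sigC x (w.drop k) u t := by
        apply intervalIntegral.integral_congr
        intro r hr
        rw [Set.uIcc_of_le hs] at hr
        dsimp only
        rw [ih r hr.2, Finset.mul_sum]
        exact Finset.sum_congr rfl fun k _ => by ring
      have hsum : (∫ r in s..u, ∑ k ∈ Finset.range (w.length + 1),
              (deriv (fun r => x r i) r * sigC x (w.take k) r u)
                * sigC x (w.drop k) u t)
          = ∑ k ∈ Finset.range (w.length + 1),
              sigC x ((i :: w).take (k + 1)) s u
                * sigC x ((i :: w).drop (k + 1)) u t := by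
        rw [intervalIntegral.integral_finset_sum]
        · refine Finset.sum_congr rfl fun k _ => ?_
          rw [intervalIntegral.integral_mul_const]
          rfl
        · intro k _
          exact ((hderiv.mul (sigC_cont x hx (w.take k) u)).mul
            continuous_const).intervalIntegrable s u
      rw [hsplit, hcongr, hsum, List.length_cons,
        Finset.sum_range_succ'
          (fun k => sigC x (List.take k (i :: w)) s u
            * sigC x (List.drop k (i :: w)) u t) (w.length + 1)]
      norm_num [show sigC x [] s u = 1 from rfl]
  intro w
  exact key w s hsu
end

section
/- Let ξ be a fractional Brownian motion with Hurst parameter H = 1 on [0,T], i.e., ξ_t = t·Z with Z standard normal. For the tracking problem with dynamics Y^U_t = ∫₀ᵗ U_s ds − ξ_t and cost E[½∫₀ᵀ((Y^U_t)² + κ U_t²)dt], any optimal control is of the form U*_t = Z·f(t) for a deterministic function f, i.e., the optimal control is linear in the slope Z. -/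
open MeasureTheory intervalIntegral ProbabilityTheory

/-- The expected cost of the tracking problem for `ξ_t = t·Z` (fBm with `H=1`):
`J(U) = E[½∫₀ᵀ((∫₀ᵗ U_s ds − t Z)² + κ U_t²) dt]`. -/
noncomputable def trackCost {Ω : Type*} [MeasurableSpace Ω] (Pm : Measure Ω)
    (T κ : ℝ) (Z : Ω → ℝ) (U : ℝ → Ω → ℝ) : ℝ :=
  ∫ ω, ((1 / 2) * ∫ t in (0:ℝ)..T,
    (((∫ s in (0:ℝ)..t, U s ω) - t * Z ω) ^ 2 + κ * (U t ω) ^ 2)) ∂Pm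

/-- Admissible controls for the `H = 1` tracking problem: jointly measurable,
square integrable on `[0,T]×Ω`, and adapted (at each time a measurable function
of the observed slope `Z`). -/
def trackAdm {Ω : Type*} [MeasurableSpace Ω] (Pm : Measure Ω) (T : ℝ)
    (Z : Ω → ℝ) : Set (ℝ → Ω → ℝ) :=
  {U | Measurable (Function.uncurry U) ∧
    Integrable (fun p : ℝ × Ω => (U p.1 p.2) ^ 2)
      ((volume.restrict (Set.Icc 0 T)).prod Pm) ∧
    ∀ t, ∃ g : ℝ → ℝ, Measurable g ∧ ∀ ω, U t ω = g (Z ω)}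

open Real

section CS

variable {α : Type*} [MeasurableSpace α] {m : Measure α} {g h : α → ℝ}

lemma integrable_mul_of_memL2 (hg : MemLp g 2 m) (hh : MemLp h 2 m) :
    Integrable (fun x => g x * h x) m := by
  have hg2 : Integrable (fun x => g x ^ 2) m := (memLp_two_iff_integrable_sq hg.1).1 hg
  have hh2 : Integrable (fun x => h x ^ 2) m := (memLp_two_iff_integrable_sq hh.1).1 hh
  refine ((hg2.add hh2).const_mul (1/2)).mono' (hg.1.mul hh.1) (ae_of_all _ fun x => ?_)
  simp only [norm_mul, Real.norm_eq_abs, Pi.add_apply]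
  nlinarith [sq_nonneg (|g x| - |h x|), sq_abs (g x), sq_abs (h x)]

lemma cs_integral (hg : MemLp g 2 m) (hh : MemLp h 2 m) :
    (∫ x, g x * h x ∂m) ^ 2 ≤ (∫ x, g x ^ 2 ∂m) * (∫ x, h x ^ 2 ∂m) := by
  have hg2 : Integrable (fun x => g x ^ 2) m := (memLp_two_iff_integrable_sq hg.1).1 hg
  have hh2 : Integrable (fun x => h x ^ 2) m := (memLp_two_iff_integrable_sq hh.1).1 hh
  have hgh : Integrable (fun x => g x * h x) m := integrable_mul_of_memL2 hg hh
  have key : ∀ x : ℝ, 0 ≤ (∫ a, g a ^ 2 ∂m) * (x * x) +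
      (2 * ∫ a, g a * h a ∂m) * x + ∫ a, h a ^ 2 ∂m := by
    intro x
    have h0 : 0 ≤ ∫ a, (x * g a + h a) ^ 2 ∂m := integral_nonneg fun a => sq_nonneg _
    have hrw : (fun a => (x * g a + h a) ^ 2) =
        fun a => (x * x) * g a ^ 2 + ((2 * x) * (g a * h a) + h a ^ 2) :=
      funext fun a => by ring
    have h1 : Integrable (fun a => (x * x) * g a ^ 2) m := hg2.const_mul _
    have h2a : Integrable (fun a => (2 * x) * (g a * h a)) m := hgh.const_mul _
    have h2 : Integrable (fun a => (2 * x) * (g a * h a) + h a ^ 2) m := h2a.add hh2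
    rw [hrw, integral_add h1 h2, integral_add h2a hh2,
      MeasureTheory.integral_const_mul, MeasureTheory.integral_const_mul] at h0
    nlinarith [h0]
  have hd := discrim_le_zero key
  rw [discrim] at hd
  nlinarith [hd]

end CS

section Lift

variable {Ω : Type*} [MeasurableSpace Ω] {Pm : Measure Ω} [IsProbabilityMeasure Pm] {T : ℝ}

/-- Lift an a.e. property of `ω` to the product measure. -/
lemma ae_lift_snd {Q : Ω → Prop} (h : ∀ᵐ ω ∂Pm, Q ω) :
    ∀ᵐ p ∂((volume.restrict (Set.Icc (0:ℝ) T)).prod Pm), Q p.2 := by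
  set m := volume.restrict (Set.Icc (0:ℝ) T)
  set N := {ω | ¬ Q ω} with hN
  have hNnull : Pm N = 0 := h
  refine measure_mono_null (fun p hp => ?_)
    (?_ : (m.prod Pm) (Set.univ ×ˢ toMeasurable Pm N) = 0)
  · exact ⟨Set.mem_univ _, subset_toMeasurable Pm N hp⟩
  · rw [Measure.prod_prod, measure_toMeasurable, hNnull, mul_zero]

lemma ae_lift_fst {Q : ℝ → Prop}
    (h : ∀ᵐ t ∂(volume.restrict (Set.Icc (0:ℝ) T)), Q t) :
    ∀ᵐ p ∂((volume.restrict (Set.Icc (0:ℝ) T)).prod Pm), Q p.1 := by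
  set m := volume.restrict (Set.Icc (0:ℝ) T)
  set N := {t | ¬ Q t} with hN
  have hNnull : m N = 0 := h
  refine measure_mono_null (fun p hp => ?_)
    (?_ : (m.prod Pm) (toMeasurable m N ×ˢ Set.univ) = 0)
  · exact ⟨subset_toMeasurable m N hp, Set.mem_univ _⟩
  · rw [Measure.prod_prod, measure_toMeasurable, hNnull, zero_mul]

example : IsFiniteMeasure (volume.restrict (Set.Icc (0:ℝ) T)) := by infer_instance

end Lift
section Prim

variable {Ω : Type*} [MeasurableSpace Ω] {Pm : Measure Ω} [IsProbabilityMeasure Pm]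
  {T : ℝ} {W : ℝ → Ω → ℝ}

lemma sect_memL2 (hWm : Measurable (Function.uncurry W))
    (hW2 : Integrable (fun p : ℝ × Ω => W p.1 p.2 ^ 2)
      ((volume.restrict (Set.Icc (0:ℝ) T)).prod Pm)) :
    ∀ᵐ ω ∂Pm, MemLp (fun t => W t ω) 2 (volume.restrict (Set.Icc (0:ℝ) T)) := by
  have hsw := hW2.swap
  filter_upwards [hsw.prod_right_ae] with ω hω
  have hsect : Measurable (fun t => W t ω) :=
    hWm.comp (measurable_id.prodMk measurable_const)
  refine (memLp_two_iff_integrable_sq hsect.aestronglyMeasurable).2 ?_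
  simpa [Function.comp] using hω

lemma sect_int (hWm : Measurable (Function.uncurry W))
    (hW2 : Integrable (fun p : ℝ × Ω => W p.1 p.2 ^ 2)
      ((volume.restrict (Set.Icc (0:ℝ) T)).prod Pm)) :
    ∀ᵐ ω ∂Pm, Integrable (fun t => W t ω) (volume.restrict (Set.Icc (0:ℝ) T)) := by
  filter_upwards [sect_memL2 hWm hW2] with ω hω
  exact hω.integrable one_le_two

lemma prim_meas (hWm : Measurable (Function.uncurry W)) :
    StronglyMeasurable (fun p : ℝ × Ω =>
      ∫ s, (Set.Ioc (0:ℝ) p.1).indicator (fun s => W s p.2) s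
        ∂(volume.restrict (Set.Icc (0:ℝ) T))) := by
  have hA : MeasurableSet {q : (ℝ × Ω) × ℝ | q.2 ∈ Set.Ioc (0:ℝ) q.1.1} := by
    have : {q : (ℝ × Ω) × ℝ | q.2 ∈ Set.Ioc (0:ℝ) q.1.1}
        = {q : (ℝ × Ω) × ℝ | (0:ℝ) < q.2} ∩ {q : (ℝ × Ω) × ℝ | q.2 ≤ q.1.1} := by
      ext q; simp [Set.mem_Ioc, and_comm]
    rw [this]
    exact (measurableSet_lt measurable_const measurable_snd).inter
      (measurableSet_le measurable_snd measurable_fst.fst)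
  have hg : Measurable (fun q : (ℝ × Ω) × ℝ => W q.2 q.1.2) :=
    hWm.comp (measurable_snd.prodMk measurable_fst.snd)
  have hF : StronglyMeasurable (fun q : (ℝ × Ω) × ℝ =>
      (Set.Ioc (0:ℝ) q.1.1).indicator (fun s => W s q.1.2) q.2) := by
    have heq : (fun q : (ℝ × Ω) × ℝ =>
        (Set.Ioc (0:ℝ) q.1.1).indicator (fun s => W s q.1.2) q.2)
        = Set.indicator {q : (ℝ × Ω) × ℝ | q.2 ∈ Set.Ioc (0:ℝ) q.1.1}
          (fun q => W q.2 q.1.2) := by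
      funext q
      by_cases hq : (0:ℝ) < q.2 ∧ q.2 ≤ q.1.1 <;>
        simp [Set.indicator_apply, Set.mem_Ioc, hq]
    rw [heq]
    exact ((hg.indicator hA)).stronglyMeasurable
  exact hF.integral_prod_right'

lemma prim_ae (hWm : Measurable (Function.uncurry W))
    (hW2 : Integrable (fun p : ℝ × Ω => W p.1 p.2 ^ 2)
      ((volume.restrict (Set.Icc (0:ℝ) T)).prod Pm)) :
    ∀ᵐ p ∂((volume.restrict (Set.Icc (0:ℝ) T)).prod Pm),
      (∫ s in (0:ℝ)..p.1, W s p.2)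
        = ∫ s, (Set.Ioc (0:ℝ) p.1).indicator (fun s => W s p.2) s
            ∂(volume.restrict (Set.Icc (0:ℝ) T)) := by
  have h1 : ∀ᵐ p ∂((volume.restrict (Set.Icc (0:ℝ) T)).prod Pm), p.1 ∈ Set.Icc (0:ℝ) T :=
    ae_lift_fst (ae_restrict_mem measurableSet_Icc)
  have h2 : ∀ᵐ p ∂((volume.restrict (Set.Icc (0:ℝ) T)).prod Pm),
      Integrable (fun t => W t p.2) (volume.restrict (Set.Icc (0:ℝ) T)) :=
    ae_lift_snd (sect_int hWm hW2)
  filter_upwards [h1, h2] with p hp hint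
  have hsub : Set.Ioc (0:ℝ) p.1 ⊆ Set.Icc (0:ℝ) T := fun s hs => ⟨hs.1.le, hs.2.trans hp.2⟩
  rw [MeasureTheory.integral_indicator measurableSet_Ioc,
    Measure.restrict_restrict measurableSet_Ioc, Set.inter_eq_self_of_subset_left hsub,
    integral_of_le hp.1]

lemma prim_bound (hT : 0 ≤ T) (hWm : Measurable (Function.uncurry W))
    (hW2 : Integrable (fun p : ℝ × Ω => W p.1 p.2 ^ 2)
      ((volume.restrict (Set.Icc (0:ℝ) T)).prod Pm)) :
    ∀ᵐ p ∂((volume.restrict (Set.Icc (0:ℝ) T)).prod Pm),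
      (∫ s in (0:ℝ)..p.1, W s p.2) ^ 2
        ≤ T * ∫ s, W s p.2 ^ 2 ∂(volume.restrict (Set.Icc (0:ℝ) T)) := by
  set m := volume.restrict (Set.Icc (0:ℝ) T) with hm
  filter_upwards [prim_ae hWm hW2, ae_lift_snd (sect_memL2 hWm hW2)] with p hrep hL2
  rw [hrep]
  have hind : (fun s => (Set.Ioc (0:ℝ) p.1).indicator (fun s => W s p.2) s)
      = fun s => (Set.Ioc (0:ℝ) p.1).indicator (fun _ => (1:ℝ)) s * W s p.2 := by
    funext s
    by_cases hs : s ∈ Set.Ioc (0:ℝ) p.1 <;> simp [Set.indicator_apply, hs]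
  have hcs := cs_integral (m := m)
    (MemLp.indicator (s := Set.Ioc (0:ℝ) p.1) measurableSet_Ioc (memLp_const (1:ℝ))) hL2
  have hindsq : (fun s => ((Set.Ioc (0:ℝ) p.1).indicator (fun _ => (1:ℝ)) s) ^ 2)
      = fun s => (Set.Ioc (0:ℝ) p.1).indicator (fun _ => (1:ℝ)) s := by
    funext s
    by_cases hs : s ∈ Set.Ioc (0:ℝ) p.1 <;> simp [Set.indicator_apply, hs]
  have hle : ∫ s, ((Set.Ioc (0:ℝ) p.1).indicator (fun _ => (1:ℝ)) s) ^ 2 ∂m ≤ T := by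
    rw [hindsq, MeasureTheory.integral_indicator_const (1:ℝ) measurableSet_Ioc]
    simp only [smul_eq_mul, mul_one]
    have h1 : m (Set.Ioc 0 p.1) ≤ m Set.univ := measure_mono (Set.subset_univ _)
    have h2 : m Set.univ = ENNReal.ofReal T := by
      rw [hm, Measure.restrict_apply_univ, Real.volume_Icc, sub_zero]
    calc (m (Set.Ioc 0 p.1)).toReal ≤ (m Set.univ).toReal :=
          ENNReal.toReal_mono (by rw [h2]; exact ENNReal.ofReal_ne_top) h1
      _ = T := by rw [h2, ENNReal.toReal_ofReal hT]
  calc (∫ s, (Set.Ioc (0:ℝ) p.1).indicator (fun s => W s p.2) s ∂m) ^ 2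
      = (∫ s, (Set.Ioc (0:ℝ) p.1).indicator (fun _ => (1:ℝ)) s * W s p.2 ∂m) ^ 2 := by
        rw [hind]
    _ ≤ (∫ s, ((Set.Ioc (0:ℝ) p.1).indicator (fun _ => (1:ℝ)) s) ^ 2 ∂m)
        * (∫ s, (W s p.2) ^ 2 ∂m) := hcs
    _ ≤ T * ∫ s, (W s p.2) ^ 2 ∂m :=
        mul_le_mul_of_nonneg_right hle (integral_nonneg fun s => sq_nonneg _)

lemma prim_aesm (hWm : Measurable (Function.uncurry W))
    (hW2 : Integrable (fun p : ℝ × Ω => W p.1 p.2 ^ 2)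
      ((volume.restrict (Set.Icc (0:ℝ) T)).prod Pm)) :
    AEStronglyMeasurable (fun p : ℝ × Ω => ∫ s in (0:ℝ)..p.1, W s p.2)
      ((volume.restrict (Set.Icc (0:ℝ) T)).prod Pm) :=
  (prim_meas hWm).aestronglyMeasurable.congr
    ((prim_ae hWm hW2).mono fun p hp => hp.symm)

lemma S_int (hWm : Measurable (Function.uncurry W))
    (hW2 : Integrable (fun p : ℝ × Ω => W p.1 p.2 ^ 2)
      ((volume.restrict (Set.Icc (0:ℝ) T)).prod Pm)) :
    Integrable (fun ω => ∫ s, W s ω ^ 2 ∂(volume.restrict (Set.Icc (0:ℝ) T))) Pm := by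
  have h := hW2.swap.integral_prod_left
  simpa [Function.comp] using h

lemma prim_sq_int (hT : 0 ≤ T) (hWm : Measurable (Function.uncurry W))
    (hW2 : Integrable (fun p : ℝ × Ω => W p.1 p.2 ^ 2)
      ((volume.restrict (Set.Icc (0:ℝ) T)).prod Pm)) :
    Integrable (fun p : ℝ × Ω => (∫ s in (0:ℝ)..p.1, W s p.2) ^ 2)
      ((volume.restrict (Set.Icc (0:ℝ) T)).prod Pm) := by
  set m := volume.restrict (Set.Icc (0:ℝ) T) with hm
  have hdom : Integrable (fun p : ℝ × Ω => T * ∫ s, W s p.2 ^ 2 ∂m) (m.prod Pm) := by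
    have h1 := (integrable_const (1:ℝ) (μ := m)).mul_prod (S_int hWm hW2)
    simpa using h1.const_mul T
  have haesm := prim_aesm hWm hW2
  have haesm2 : AEStronglyMeasurable (fun p : ℝ × Ω => (∫ s in (0:ℝ)..p.1, W s p.2) ^ 2)
      (m.prod Pm) :=
    (haesm.mul haesm).congr (ae_of_all _ fun p => (pow_two _).symm)
  refine hdom.mono' haesm2 ?_
  filter_upwards [prim_bound hT hWm hW2] with p hp
  rw [Real.norm_eq_abs, abs_of_nonneg (sq_nonneg _)]
  exact hp

end Prim
lemma gauss_pdf_toReal (x : ℝ) :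
    (gaussianPDF 0 1 x).toReal = (Real.sqrt (2 * π))⁻¹ * Real.exp (-(1/2) * x ^ 2) := by
  rw [gaussianPDF, ENNReal.toReal_ofReal (gaussianPDFReal_nonneg _ _ _), gaussianPDFReal]
  norm_num
  ring_nf
  simp

lemma gauss_sq_int : Integrable (fun x : ℝ => x ^ 2) (gaussianReal 0 1) := by
  rw [gaussianReal_of_var_ne_zero _ one_ne_zero]
  rw [integrable_withDensity_iff (measurable_gaussianPDF _ _)
    (ae_of_all _ fun x => ENNReal.ofReal_lt_top)]
  have h : Integrable (fun x : ℝ => (x ^ (2:ℝ)) * Real.exp (-(1/2) * x ^ 2)) volume :=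
    integrable_rpow_mul_exp_neg_mul_sq (by norm_num) (by norm_num)
  have h2 : Integrable (fun x : ℝ => (x ^ 2) * Real.exp (-(1/2) * x ^ 2)) volume := by
    convert h using 2 with x
    rw [show ((2:ℝ) = ((2:ℕ):ℝ)) by norm_num, Real.rpow_natCast]
  refine (h2.const_mul ((Real.sqrt (2 * π))⁻¹)).congr (ae_of_all _ fun x => ?_)
  simp only [gauss_pdf_toReal]
  ring

section Gauss

variable {Ω : Type*} [MeasurableSpace Ω] {Pm : Measure Ω} [IsProbabilityMeasure Pm] {Z : Ω → ℝ}

lemma Zmem (hZmeas : Measurable Z) (hZ : Measure.map Z Pm = gaussianReal 0 1) :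
    MemLp Z 2 Pm := by
  have h1 : MemLp (id : ℝ → ℝ) 2 (gaussianReal 0 1) :=
    (memLp_two_iff_integrable_sq aestronglyMeasurable_id).2 (by simpa using gauss_sq_int)
  rw [← hZ] at h1
  have := (memLp_map_measure_iff aestronglyMeasurable_id hZmeas.aemeasurable).1 h1
  simpa [Function.comp] using this

lemma Zsq_pos (hZmeas : Measurable Z) (hZ : Measure.map Z Pm = gaussianReal 0 1) :
    0 < ∫ ω, Z ω ^ 2 ∂Pm := by
  have hmap : ∫ ω, Z ω ^ 2 ∂Pm = ∫ x, x ^ 2 ∂(gaussianReal 0 1) := by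
    rw [← hZ, integral_map hZmeas.aemeasurable]
    exact (measurable_id.pow_const 2).aestronglyMeasurable
  rw [hmap]
  rw [integral_pos_iff_support_of_nonneg_ae (ae_of_all _ fun x => sq_nonneg x) gauss_sq_int]
  have h0 : (gaussianReal 0 1) {(0:ℝ)} = 0 :=
    gaussianReal_absolutelyContinuous 0 one_ne_zero (by simp)
  have hsupp : Function.support (fun x : ℝ => x ^ 2) = {(0:ℝ)}ᶜ := by
    ext x; simp [Function.mem_support, pow_eq_zero_iff]
  rw [hsupp]
  have h1 : (gaussianReal 0 1) {(0:ℝ)}ᶜ = 1 := by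
    rw [measure_compl (measurableSet_singleton 0) (measure_ne_top _ _), h0]; simp
  simp [h1]

end Gauss

section Cost

variable {Ω : Type*} [MeasurableSpace Ω] {Pm : Measure Ω} [IsProbabilityMeasure Pm]
  {Z : Ω → ℝ} {T : ℝ} {W : ℝ → Ω → ℝ}

lemma Asq_int (hT : 0 ≤ T) (hZmeas : Measurable Z)
    (hZsq : Integrable (fun ω => Z ω ^ 2) Pm)
    (hWm : Measurable (Function.uncurry W))
    (hW2 : Integrable (fun p : ℝ × Ω => W p.1 p.2 ^ 2)
      ((volume.restrict (Set.Icc (0:ℝ) T)).prod Pm)) :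
    Integrable (fun p : ℝ × Ω => ((∫ s in (0:ℝ)..p.1, W s p.2) - p.1 * Z p.2) ^ 2)
      ((volume.restrict (Set.Icc (0:ℝ) T)).prod Pm) := by
  set m := volume.restrict (Set.Icc (0:ℝ) T) with hm
  have ht2 : Integrable (fun t : ℝ => t ^ 2) m := by
    have := (continuous_pow 2 (M := ℝ)).integrableOn_Icc (μ := volume) (a := (0:ℝ)) (b := T)
    exact this
  have htZ2 : Integrable (fun p : ℝ × Ω => (p.1 * Z p.2) ^ 2) (m.prod Pm) := by
    have h1 := ht2.mul_prod hZsq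
    exact h1.congr (ae_of_all _ fun p => by ring)
  have haesm : AEStronglyMeasurable
      (fun p : ℝ × Ω => ((∫ s in (0:ℝ)..p.1, W s p.2) - p.1 * Z p.2) ^ 2) (m.prod Pm) := by
    have h1 : AEStronglyMeasurable (fun p : ℝ × Ω => p.1 * Z p.2) (m.prod Pm) :=
      (measurable_fst.mul (hZmeas.comp measurable_snd)).aestronglyMeasurable
    have h2 := (prim_aesm hWm hW2).sub h1
    exact (h2.mul h2).congr (ae_of_all _ fun p => (pow_two _).symm)
  refine (((prim_sq_int hT hWm hW2).add htZ2).const_mul 2).mono' haesm ?_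
  refine ae_of_all _ fun p => ?_
  rw [Real.norm_eq_abs, abs_of_nonneg (sq_nonneg _)]
  simp only [Pi.add_apply]
  nlinarith [sq_nonneg ((∫ s in (0:ℝ)..p.1, W s p.2) + p.1 * Z p.2)]

lemma costEq {κ : ℝ} (hT : 0 ≤ T) (hZmeas : Measurable Z)
    (hZsq : Integrable (fun ω => Z ω ^ 2) Pm)
    (hWm : Measurable (Function.uncurry W))
    (hW2 : Integrable (fun p : ℝ × Ω => W p.1 p.2 ^ 2)
      ((volume.restrict (Set.Icc (0:ℝ) T)).prod Pm)) :
    trackCost Pm T κ Z W = (1/2) *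
      ∫ p, (((∫ s in (0:ℝ)..p.1, W s p.2) - p.1 * Z p.2) ^ 2 + κ * W p.1 p.2 ^ 2)
        ∂((volume.restrict (Set.Icc (0:ℝ) T)).prod Pm) := by
  set m := volume.restrict (Set.Icc (0:ℝ) T) with hm
  set G : ℝ × Ω → ℝ :=
    fun p => ((∫ s in (0:ℝ)..p.1, W s p.2) - p.1 * Z p.2) ^ 2 + κ * W p.1 p.2 ^ 2 with hG
  have hGint : Integrable G (m.prod Pm) :=
    (Asq_int hT hZmeas hZsq hWm hW2).add (hW2.const_mul κ)
  have hrw : ∀ ω, (∫ t in (0:ℝ)..T,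
      (((∫ s in (0:ℝ)..t, W s ω) - t * Z ω) ^ 2 + κ * W t ω ^ 2))
      = ∫ t, G (t, ω) ∂m := by
    intro ω
    rw [integral_of_le hT, hm, ← MeasureTheory.integral_Icc_eq_integral_Ioc]
  rw [trackCost]
  simp_rw [hrw]
  rw [MeasureTheory.integral_const_mul]
  congr 1
  rw [MeasureTheory.integral_integral (f := fun ω t => G (t, ω)) hGint.swap,
    ← MeasureTheory.integral_prod_swap G]
  rfl

end Cost

/-- Optimal tracking of a fractional Brownian motion with Hurst parameter
`H = 1`, i.e. `ξ_t = t·Z` with `Z` standard normal: any optimal admissible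
control is of the form `U*_t = Z·f(t)` for a deterministic function `f`. -/
theorem stmt16 {Ω : Type*} [MeasurableSpace Ω] (Pm : Measure Ω)
    [IsProbabilityMeasure Pm] (Z : Ω → ℝ) (hZmeas : Measurable Z)
    (hZ : Measure.map Z Pm = gaussianReal 0 1)
    (T κ : ℝ) (hT : 0 < T) (hκ : 0 < κ)
    (U : ℝ → Ω → ℝ) (hU : U ∈ trackAdm Pm T Z)
    (hopt : ∀ U' ∈ trackAdm Pm T Z, trackCost Pm T κ Z U ≤ trackCost Pm T κ Z U') :
    ∃ f : ℝ → ℝ, ∀ᵐ p ∂((volume.restrict (Set.Icc 0 T)).prod Pm),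
      U p.1 p.2 = Z p.2 * f p.1 := by
  obtain ⟨hUm, hU2, -⟩ := hU
  have hT0 : (0:ℝ) ≤ T := hT.le
  set m := volume.restrict (Set.Icc (0:ℝ) T) with hm
  have hZ2 : MemLp Z 2 Pm := Zmem hZmeas hZ
  have hZsqInt : Integrable (fun ω => Z ω ^ 2) Pm := (memLp_two_iff_integrable_sq hZ2.1).1 hZ2
  set c : ℝ := ∫ ω, Z ω ^ 2 ∂Pm with hc
  have hcpos : 0 < c := by rw [hc]; exact Zsq_pos hZmeas hZ
  set f : ℝ → ℝ := fun t => (∫ ω, Z ω * U t ω ∂Pm) / c with hfdef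
  have hfm : Measurable f := by
    have hZU : Measurable (fun p : ℝ × Ω => Z p.2 * U p.1 p.2) :=
      (hZmeas.comp measurable_snd).mul hUm
    exact (hZU.stronglyMeasurable.integral_prod_right').measurable.div_const c
  have hUt2 : ∀ᵐ t ∂m, MemLp (fun ω => U t ω) 2 Pm := by
    filter_upwards [hU2.prod_right_ae] with t ht
    have hmeas : Measurable fun ω => U t ω := hUm.comp (measurable_const.prodMk measurable_id)
    exact (memLp_two_iff_integrable_sq hmeas.aestronglyMeasurable).2 ht
  have hSU : Integrable (fun t => ∫ ω, U t ω ^ 2 ∂Pm) m := hU2.integral_prod_left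
  have hfsq : Integrable (fun t => f t ^ 2) m := by
    refine (hSU.const_mul c⁻¹).mono' ((hfm.pow_const 2).aestronglyMeasurable) ?_
    filter_upwards [hUt2] with t ht
    have hcs := cs_integral hZ2 ht
    rw [Real.norm_eq_abs, abs_of_nonneg (sq_nonneg _)]
    have hft : f t = (∫ ω, Z ω * U t ω ∂Pm) / c := rfl
    rw [hft, div_pow, div_le_iff₀ (by positivity)]
    have heq : c⁻¹ * (∫ ω, U t ω ^ 2 ∂Pm) * c ^ 2 = c * ∫ ω, U t ω ^ 2 ∂Pm := by
      field_simp
    rw [heq]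
    exact hcs
  set U' : ℝ → Ω → ℝ := fun t ω => Z ω * f t with hU'def
  have hU'm : Measurable (Function.uncurry U') :=
    (hZmeas.comp measurable_snd).mul (hfm.comp measurable_fst)
  have hU'2 : Integrable (fun p : ℝ × Ω => U' p.1 p.2 ^ 2) (m.prod Pm) := by
    have h1 := hfsq.mul_prod hZsqInt
    exact h1.congr (ae_of_all _ fun p => by simp only [hU'def]; ring)
  have hU'adm : U' ∈ trackAdm Pm T Z := by
    refine ⟨hU'm, ?_, fun t => ⟨fun z => z * f t, measurable_id.mul_const _, fun ω => rfl⟩⟩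
    exact hU'2
  set R : ℝ → Ω → ℝ := fun t ω => U t ω - U' t ω with hRdef
  have hRm : Measurable (Function.uncurry R) := by
    have huncR : Function.uncurry R =
        fun p : ℝ × Ω => Function.uncurry U p - Function.uncurry U' p := rfl
    rw [huncR]; exact hUm.sub hU'm
  have hR2 : Integrable (fun p : ℝ × Ω => R p.1 p.2 ^ 2) (m.prod Pm) := by
    refine ((hU2.add hU'2).const_mul 2).mono' ((hRm.pow_const 2).aestronglyMeasurable) ?_
    refine ae_of_all _ fun p => ?_
    rw [Real.norm_eq_abs, abs_of_nonneg (sq_nonneg _)]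
    simp only [Pi.add_apply, hRdef]
    nlinarith [sq_nonneg (U p.1 p.2 + U' p.1 p.2)]
  have hMZ : MemLp (fun p : ℝ × Ω => Z p.2) 2 (m.prod Pm) := by
    refine (memLp_two_iff_integrable_sq ((hZmeas.comp measurable_snd).aestronglyMeasurable)).2 ?_
    have h1 := (integrable_const (1:ℝ) (μ := m)).mul_prod hZsqInt
    simpa using h1
  have hMU' : MemLp (fun p : ℝ × Ω => U' p.1 p.2) 2 (m.prod Pm) :=
    (memLp_two_iff_integrable_sq hU'm.aestronglyMeasurable).2 hU'2
  have hMR : MemLp (fun p : ℝ × Ω => R p.1 p.2) 2 (m.prod Pm) :=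
    (memLp_two_iff_integrable_sq hRm.aestronglyMeasurable).2 hR2
  have horth : ∀ᵐ t ∂m, ∫ ω, Z ω * R t ω ∂Pm = 0 := by
    filter_upwards [hUt2] with t ht
    have hint1 : Integrable (fun ω => Z ω * U t ω) Pm := integrable_mul_of_memL2 hZ2 ht
    have hint2 : Integrable (fun ω => Z ω * U' t ω) Pm := by
      have h1 := hZsqInt.mul_const (f t)
      exact h1.congr (ae_of_all _ fun ω => by simp only [hU'def]; ring)
    have hsplit : ∫ ω, Z ω * R t ω ∂Pm
        = (∫ ω, Z ω * U t ω ∂Pm) - ∫ ω, Z ω * U' t ω ∂Pm := by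
      rw [← integral_sub hint1 hint2]
      refine integral_congr_ae (ae_of_all _ fun ω => ?_)
      simp only [hRdef]; ring
    have hU'int : ∫ ω, Z ω * U' t ω ∂Pm = c * f t := by
      have h1 : (fun ω => Z ω * U' t ω) = fun ω => Z ω ^ 2 * f t := by
        funext ω; simp only [hU'def]; ring
      rw [h1, MeasureTheory.integral_mul_const, ← hc]
    have hUint : ∫ ω, Z ω * U t ω ∂Pm = c * f t := by
      have hft : f t = (∫ ω, Z ω * U t ω ∂Pm) / c := rfl
      rw [hft]; field_simp
    rw [hsplit, hUint, hU'int, sub_self]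
  have hRsect := sect_int hRm hR2
  have hZRint : Integrable (fun p : ℝ × Ω => Z p.2 * R p.1 p.2) (m.prod Pm) :=
    integrable_mul_of_memL2 hMZ hMR
  have hZB : ∀ᵐ t ∂m, ∫ ω, Z ω * (∫ s in (0:ℝ)..t, R s ω) ∂Pm = 0 := by
    filter_upwards [ae_restrict_mem (measurableSet_Icc (a := (0:ℝ)) (b := T))] with t ht
    have hsub : Set.Ioc (0:ℝ) t ⊆ Set.Icc (0:ℝ) T := fun s hs => ⟨hs.1.le, hs.2.trans ht.2⟩
    have hmr : volume.restrict (Set.Ioc (0:ℝ) t) = m.restrict (Set.Ioc 0 t) := by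
      rw [hm, Measure.restrict_restrict measurableSet_Ioc,
        Set.inter_eq_self_of_subset_left hsub]
    have hZRt : Integrable (fun p : ℝ × Ω => Z p.2 * R p.1 p.2)
        ((volume.restrict (Set.Ioc (0:ℝ) t)).prod Pm) := by
      rw [hmr, Measure.restrict_prod_eq_prod_univ]
      exact hZRint.restrict
    have step1 : ∫ ω, Z ω * (∫ s in (0:ℝ)..t, R s ω) ∂Pm
        = ∫ ω, ∫ s, Z ω * R s ω ∂(volume.restrict (Set.Ioc (0:ℝ) t)) ∂Pm := by
      refine integral_congr_ae (ae_of_all _ fun ω => ?_)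
      show Z ω * (∫ s in (0:ℝ)..t, R s ω)
        = ∫ s, Z ω * R s ω ∂(volume.restrict (Set.Ioc (0:ℝ) t))
      rw [MeasureTheory.integral_const_mul, integral_of_le ht.1]
    have step2 : ∫ ω, ∫ s, Z ω * R s ω ∂(volume.restrict (Set.Ioc (0:ℝ) t)) ∂Pm
        = ∫ s, (∫ ω, Z ω * R s ω ∂Pm) ∂(volume.restrict (Set.Ioc (0:ℝ) t)) :=
      MeasureTheory.integral_integral_swap (f := fun ω s => Z ω * R s ω) hZRt.swap
    have step3 : ∫ s, (∫ ω, Z ω * R s ω ∂Pm) ∂(volume.restrict (Set.Ioc (0:ℝ) t)) = 0 := by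
      have hae : ∀ᵐ s ∂(volume.restrict (Set.Ioc (0:ℝ) t)), (∫ ω, Z ω * R s ω ∂Pm) = 0 := by
        rw [hmr]; exact ae_restrict_of_ae horth
      rw [integral_congr_ae hae]
      simp
    rw [step1, step2, step3]
  have hA'B_int : Integrable (fun p : ℝ × Ω =>
      ((∫ s in (0:ℝ)..p.1, U' s p.2) - p.1 * Z p.2) * (∫ s in (0:ℝ)..p.1, R s p.2))
      (m.prod Pm) := by
    refine integrable_mul_of_memL2 ?_ ?_
    · exact (memLp_two_iff_integrable_sq ((prim_aesm hU'm hU'2).sub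
        ((measurable_fst.mul (hZmeas.comp measurable_snd)).aestronglyMeasurable))).2
        (Asq_int hT0 hZmeas hZsqInt hU'm hU'2)
    · exact (memLp_two_iff_integrable_sq (prim_aesm hRm hR2)).2 (prim_sq_int hT0 hRm hR2)
  have hU'R_int : Integrable (fun p : ℝ × Ω => U' p.1 p.2 * R p.1 p.2) (m.prod Pm) :=
    integrable_mul_of_memL2 hMU' hMR
  have hinner1 : ∀ᵐ t ∂m, ∫ ω, ((∫ s in (0:ℝ)..t, U' s ω) - t * Z ω)
      * (∫ s in (0:ℝ)..t, R s ω) ∂Pm = 0 := by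
    filter_upwards [hZB] with t hZBt
    have hA'eq : ∀ ω : Ω, (∫ s in (0:ℝ)..t, U' s ω) - t * Z ω
        = ((∫ s in (0:ℝ)..t, f s) - t) * Z ω := by
      intro ω
      have h1 : (∫ s in (0:ℝ)..t, U' s ω) = Z ω * ∫ s in (0:ℝ)..t, f s := by
        rw [← intervalIntegral.integral_const_mul]
      rw [h1]; ring
    have h2 : (fun ω => ((∫ s in (0:ℝ)..t, U' s ω) - t * Z ω) * (∫ s in (0:ℝ)..t, R s ω))
        = fun ω => ((∫ s in (0:ℝ)..t, f s) - t) * (Z ω * (∫ s in (0:ℝ)..t, R s ω)) := by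
      funext ω; rw [hA'eq]; ring
    rw [h2, MeasureTheory.integral_const_mul, hZBt, mul_zero]
  have hinner2 : ∀ᵐ t ∂m, ∫ ω, U' t ω * R t ω ∂Pm = 0 := by
    filter_upwards [horth] with t ht
    have h1 : (fun ω => U' t ω * R t ω) = fun ω => f t * (Z ω * R t ω) := by
      funext ω; simp only [hU'def]; ring
    rw [h1, MeasureTheory.integral_const_mul, ht, mul_zero]
  have hCint2 : Integrable (fun p : ℝ × Ω =>
      ((∫ s in (0:ℝ)..p.1, U' s p.2) - p.1 * Z p.2) * (∫ s in (0:ℝ)..p.1, R s p.2)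
        + κ * (U' p.1 p.2 * R p.1 p.2)) (m.prod Pm) :=
    hA'B_int.add (hU'R_int.const_mul κ)
  have hcross : ∫ p, (((∫ s in (0:ℝ)..p.1, U' s p.2) - p.1 * Z p.2)
      * (∫ s in (0:ℝ)..p.1, R s p.2) + κ * (U' p.1 p.2 * R p.1 p.2)) ∂(m.prod Pm) = 0 := by
    rw [MeasureTheory.integral_prod _ hCint2]
    have hz : ∀ᵐ t ∂m, ∫ ω, (((∫ s in (0:ℝ)..t, U' s ω) - t * Z ω)
        * (∫ s in (0:ℝ)..t, R s ω) + κ * (U' t ω * R t ω)) ∂Pm = 0 := by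
      filter_upwards [hinner1, hinner2, hA'B_int.prod_right_ae, hU'R_int.prod_right_ae]
        with t h1 h2 h3 h4
      rw [integral_add h3 (h4.const_mul κ), h1, MeasureTheory.integral_const_mul, h2]
      ring
    rw [integral_congr_ae hz, MeasureTheory.integral_zero]
  have hdecomp : ∀ᵐ p ∂(m.prod Pm),
      ((∫ s in (0:ℝ)..p.1, U s p.2) - p.1 * Z p.2) ^ 2 + κ * U p.1 p.2 ^ 2
      = ((((∫ s in (0:ℝ)..p.1, U' s p.2) - p.1 * Z p.2) ^ 2 + κ * U' p.1 p.2 ^ 2)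
        + ((∫ s in (0:ℝ)..p.1, R s p.2) ^ 2 + κ * R p.1 p.2 ^ 2))
        + 2 * (((∫ s in (0:ℝ)..p.1, U' s p.2) - p.1 * Z p.2)
          * (∫ s in (0:ℝ)..p.1, R s p.2) + κ * (U' p.1 p.2 * R p.1 p.2)) := by
    filter_upwards [ae_lift_fst (ae_restrict_mem measurableSet_Icc),
      ae_lift_snd (sect_int hU'm hU'2), ae_lift_snd hRsect] with p hp hU's hRs
    have hsubp : Set.Ioc (0:ℝ) p.1 ⊆ Set.Icc (0:ℝ) T :=
      fun s hs => ⟨hs.1.le, hs.2.trans hp.2⟩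
    have h1 : IntervalIntegrable (fun s => U' s p.2) volume 0 p.1 := by
      rw [intervalIntegrable_iff, Set.uIoc_of_le hp.1]
      have h := hU's.restrict (s := Set.Ioc (0:ℝ) p.1)
      rw [Measure.restrict_restrict measurableSet_Ioc,
        Set.inter_eq_self_of_subset_left hsubp] at h
      exact h
    have h2 : IntervalIntegrable (fun s => R s p.2) volume 0 p.1 := by
      rw [intervalIntegrable_iff, Set.uIoc_of_le hp.1]
      have h := hRs.restrict (s := Set.Ioc (0:ℝ) p.1)
      rw [Measure.restrict_restrict measurableSet_Ioc,
        Set.inter_eq_self_of_subset_left hsubp] at h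
      exact h
    have hsum : (∫ s in (0:ℝ)..p.1, U s p.2)
        = (∫ s in (0:ℝ)..p.1, U' s p.2) + ∫ s in (0:ℝ)..p.1, R s p.2 := by
      rw [← intervalIntegral.integral_add h1 h2]
      refine intervalIntegral.integral_congr fun s _ => ?_
      simp only [hRdef]; ring
    have hpt : U p.1 p.2 = U' p.1 p.2 + R p.1 p.2 := by simp only [hRdef]; ring
    rw [hsum, hpt]; ring
  have hGU' : Integrable (fun p : ℝ × Ω =>
      ((∫ s in (0:ℝ)..p.1, U' s p.2) - p.1 * Z p.2) ^ 2 + κ * U' p.1 p.2 ^ 2) (m.prod Pm) :=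
    (Asq_int hT0 hZmeas hZsqInt hU'm hU'2).add (hU'2.const_mul κ)
  have hGR : Integrable (fun p : ℝ × Ω =>
      (∫ s in (0:ℝ)..p.1, R s p.2) ^ 2 + κ * R p.1 p.2 ^ 2) (m.prod Pm) :=
    (prim_sq_int hT0 hRm hR2).add (hR2.const_mul κ)
  have hsplit : ∫ p, (((∫ s in (0:ℝ)..p.1, U s p.2) - p.1 * Z p.2) ^ 2
        + κ * U p.1 p.2 ^ 2) ∂(m.prod Pm)
      = (∫ p, (((∫ s in (0:ℝ)..p.1, U' s p.2) - p.1 * Z p.2) ^ 2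
          + κ * U' p.1 p.2 ^ 2) ∂(m.prod Pm))
        + (∫ p, ((∫ s in (0:ℝ)..p.1, R s p.2) ^ 2 + κ * R p.1 p.2 ^ 2) ∂(m.prod Pm))
        + 2 * ∫ p, (((∫ s in (0:ℝ)..p.1, U' s p.2) - p.1 * Z p.2)
          * (∫ s in (0:ℝ)..p.1, R s p.2) + κ * (U' p.1 p.2 * R p.1 p.2)) ∂(m.prod Pm) := by
    have hS1 : Integrable (fun p : ℝ × Ω =>
        (((∫ s in (0:ℝ)..p.1, U' s p.2) - p.1 * Z p.2) ^ 2 + κ * U' p.1 p.2 ^ 2)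
        + ((∫ s in (0:ℝ)..p.1, R s p.2) ^ 2 + κ * R p.1 p.2 ^ 2)) (m.prod Pm) :=
      hGU'.add hGR
    have hS2 : Integrable (fun p : ℝ × Ω =>
        2 * (((∫ s in (0:ℝ)..p.1, U' s p.2) - p.1 * Z p.2)
          * (∫ s in (0:ℝ)..p.1, R s p.2) + κ * (U' p.1 p.2 * R p.1 p.2))) (m.prod Pm) :=
      hCint2.const_mul 2
    rw [integral_congr_ae hdecomp, integral_add hS1 hS2,
      integral_add hGU' hGR, MeasureTheory.integral_const_mul]
  have hcostU := costEq (κ := κ) (W := U) hT0 hZmeas hZsqInt hUm hU2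
  have hcostU' := costEq (κ := κ) (W := U') hT0 hZmeas hZsqInt hU'm hU'2
  have hle := hopt U' hU'adm
  rw [hcostU, hcostU'] at hle
  have hDle : ∫ p, ((∫ s in (0:ℝ)..p.1, R s p.2) ^ 2 + κ * R p.1 p.2 ^ 2) ∂(m.prod Pm) ≤ 0 := by
    rw [hcross] at hsplit
    linarith [hsplit, hle]
  have hDge : 0 ≤ ∫ p, ((∫ s in (0:ℝ)..p.1, R s p.2) ^ 2 + κ * R p.1 p.2 ^ 2) ∂(m.prod Pm) :=
    integral_nonneg fun p => add_nonneg (sq_nonneg _) (mul_nonneg hκ.le (sq_nonneg _))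
  have hGR0 : ∀ᵐ p ∂(m.prod Pm),
      (∫ s in (0:ℝ)..p.1, R s p.2) ^ 2 + κ * R p.1 p.2 ^ 2 = 0 :=
    (integral_eq_zero_iff_of_nonneg_ae
      (ae_of_all _ fun p => add_nonneg (sq_nonneg _) (mul_nonneg hκ.le (sq_nonneg _))) hGR).1
      (le_antisymm hDle hDge)
  refine ⟨f, ?_⟩
  filter_upwards [hGR0] with p hp
  have hRsq : R p.1 p.2 ^ 2 = 0 := by
    nlinarith [sq_nonneg (∫ s in (0:ℝ)..p.1, R s p.2), sq_nonneg (R p.1 p.2), hκ]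
  have hR0 : R p.1 p.2 = 0 := pow_eq_zero_iff two_ne_zero |>.1 hRsq
  have hfin : U p.1 p.2 - Z p.2 * f p.1 = 0 := by
    simpa [hRdef, hU'def] using hR0
  linarith
end
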